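/- Let L and L′ be lists over an arbitrary type, and let k′ ∈ ℕ. If L is a sublist of L′ (i.e., L′ is obtained from L by inserting elements at arbitrary positions) and the length of L′ is at most the length of L plus k′, then for every n ∈ ℕ, the list consisting of the first n elements of L is a sublist of the list consisting of the first n + k′ elements of L′. -/

import Mathlib

lemma take_sublist_take_diff {α : Type*} {L L' : List α}
    (hsub : L.Sublist L') :
    ∀ n : ℕ, (L.take n).Sublist (L'.take (n + (L'.length - L.length))) := by
  induction hsub with
  | slnil => intro n; simp
  | cons a h ih =>
    intro n
    rename_i l₁ l₂
    have hle : l₁.length ≤ l₂.length := h.length_le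
    have : n + ((a :: l₂).length - l₁.length) = (n + (l₂.length - l₁.length)) + 1 := by
      simp [List.length_cons]; omega
    rw [this, List.take_succ_cons]
    exact (ih n).cons a
  | cons_cons a h ih =>
    intro n
    rename_i l₁ l₂
    cases n with
    | zero => simp
    | succ m =>
      have : (m + 1) + ((a :: l₂).length - (a :: l₁).length)
          = (m + (l₂.length - l₁.length)) + 1 := by
        simp [List.length_cons]; omega
      rw [this, List.take_succ_cons, List.take_succ_cons]
      exact (ih m).cons₂ a

/-- Passage-injection attack model: if `L'` is obtained from `L` by inserting
at most `k'` elements (at arbitrary positions), then the first `n` elements of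
`L` form a sublist of the first `n + k'` elements of `L'`. -/
theorem robustrag_injection_take {α : Type*} (L L' : List α) (k' : ℕ)
    (hsub : L.Sublist L') (hlen : L'.length ≤ L.length + k') :
    ∀ n : ℕ, (L.take n).Sublist (L'.take (n + k')) := by
  intro n
  have h1 := take_sublist_take_diff hsub n
  have hle : n + (L'.length - L.length) ≤ n + k' := by
    have := hsub.length_le; omega
  have h2 : (L'.take (n + (L'.length - L.length))).Sublist (L'.take (n + k')) := by
    rw [show L'.take (n + (L'.length - L.length))
        = (L'.take (n + k')).take (n + (L'.length - L.length)) by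
      rw [List.take_take, Nat.min_eq_left hle]]
    exact List.take_sublist _ _
  exact h1.trans h2
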